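/- arXiv:1810.04623 — 2 statements merged into one kernel-verified Lean document; each statement's English description precedes it below -/
import Mathlib

section
/- For every α > 0 and x > 0, the second derivative of the standardized call function satisfies χ_α''(x) = (α³/(4√(2π))) · exp(−(α²/8)(x − 1/x)²) · (1 − x⁴)/x³. -/
open Real Filter Set MeasureTheory intervalIntegral

noncomputable def stdNormalCDF (x : ℝ) : ℝ :=
  (Real.sqrt (2 * Real.pi))⁻¹ * ∫ t in Set.Iic x, Real.exp (-t ^ 2 / 2)

noncomputable def chi (α x : ℝ) : ℝ :=
  stdNormalCDF (α / 2 * (x - 1 / x)) -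
    Real.exp (α ^ 2 / 2) * stdNormalCDF (-(α / 2) * (x + 1 / x))

lemma gauss_integrable : Integrable (fun t : ℝ => Real.exp (-t ^ 2 / 2)) := by
  have h := integrable_exp_neg_mul_sq (by norm_num : (0:ℝ) < 1/2)
  convert h using 2 with t
  ring_nf

lemma hasDerivAt_stdNormalCDF (y : ℝ) :
    HasDerivAt stdNormalCDF ((Real.sqrt (2 * Real.pi))⁻¹ * Real.exp (-y ^ 2 / 2)) y := by
  have hcont : Continuous (fun t : ℝ => Real.exp (-t ^ 2 / 2)) := by continuity
  have hfun : stdNormalCDF = fun z : ℝ =>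
      (Real.sqrt (2 * Real.pi))⁻¹ *
        ((∫ t in Set.Iic (0:ℝ), Real.exp (-t ^ 2 / 2)) +
          ∫ t in (0:ℝ)..z, Real.exp (-t ^ 2 / 2)) := by
    funext z
    unfold stdNormalCDF
    congr 1
    have h := intervalIntegral.integral_Iic_sub_Iic
      (gauss_integrable.integrableOn (s := Set.Iic (0:ℝ)))
      (gauss_integrable.integrableOn (s := Set.Iic z))
    linarith
  rw [hfun]
  have hI : HasDerivAt (fun z : ℝ => ∫ t in (0:ℝ)..z, Real.exp (-t ^ 2 / 2))
      (Real.exp (-y ^ 2 / 2)) y :=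
    intervalIntegral.integral_hasDerivAt_right
      (hcont.intervalIntegrable 0 y)
      (hcont.stronglyMeasurableAtFilter _ _)
      hcont.continuousAt
  exact ((hI.const_add _).const_mul _)

lemma chi_hasDerivAt (α : ℝ) (x : ℝ) (hx : 0 < x) :
    HasDerivAt (chi α)
      (α * ((Real.sqrt (2 * Real.pi))⁻¹ *
        Real.exp (-(α / 2 * (x - 1 / x)) ^ 2 / 2))) x := by
  have hx0 : x ≠ 0 := ne_of_gt hx
  -- inner functions
  have hu : HasDerivAt (fun x : ℝ => α / 2 * (x - 1 / x))
      (α / 2 * (1 + 1 / x ^ 2)) x := by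
    have h1 : HasDerivAt (fun x : ℝ => x - 1 / x) (1 + 1 / x ^ 2) x := by
      have hinv : HasDerivAt (fun x : ℝ => 1 / x) (-(1 / x ^ 2)) x := by
        simpa [one_div] using (hasDerivAt_inv hx0)
      exact ((hasDerivAt_id x).sub hinv).congr_deriv (by ring)
    simpa using h1.const_mul (α / 2)
  have hv : HasDerivAt (fun x : ℝ => -(α / 2) * (x + 1 / x))
      (-(α / 2) * (1 - 1 / x ^ 2)) x := by
    have h1 : HasDerivAt (fun x : ℝ => x + 1 / x) (1 - 1 / x ^ 2) x := by
      have hinv : HasDerivAt (fun x : ℝ => 1 / x) (-(1 / x ^ 2)) x := by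
        simpa [one_div] using (hasDerivAt_inv hx0)
      exact ((hasDerivAt_id x).add hinv).congr_deriv (by ring)
    simpa using h1.const_mul (-(α / 2))
  have h1 := (hasDerivAt_stdNormalCDF (α / 2 * (x - 1 / x))).comp x hu
  have h2 := ((hasDerivAt_stdNormalCDF (-(α / 2) * (x + 1 / x))).comp x hv).const_mul
    (Real.exp (α ^ 2 / 2))
  have h := h1.sub h2
  refine h.congr_deriv ?_
  have hexp : Real.exp (α ^ 2 / 2) * Real.exp (-(-(α / 2) * (x + 1 / x)) ^ 2 / 2)
      = Real.exp (-(α / 2 * (x - 1 / x)) ^ 2 / 2) := by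
    rw [← Real.exp_add]
    congr 1
    field_simp
    ring
  rw [show Real.exp (α ^ 2 / 2) * ((Real.sqrt (2 * Real.pi))⁻¹ *
        Real.exp (-(-(α / 2) * (x + 1 / x)) ^ 2 / 2) * (-(α / 2) * (1 - 1 / x ^ 2)))
      = (Real.sqrt (2 * Real.pi))⁻¹ *
        (Real.exp (α ^ 2 / 2) * Real.exp (-(-(α / 2) * (x + 1 / x)) ^ 2 / 2)) *
        (-(α / 2) * (1 - 1 / x ^ 2)) by ring, hexp]
  ring

theorem chi_deriv2 (α : ℝ) (hα : 0 < α) (x : ℝ) (hx : 0 < x) :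
    HasDerivAt (deriv (chi α))
      (α ^ 3 / (4 * Real.sqrt (2 * Real.pi)) *
        Real.exp (-(α ^ 2 / 8) * (x - 1 / x) ^ 2) * ((1 - x ^ 4) / x ^ 3)) x := by
  have hx0 : x ≠ 0 := ne_of_gt hx
  set g : ℝ → ℝ := fun x => α * ((Real.sqrt (2 * Real.pi))⁻¹ *
      Real.exp (-(α / 2 * (x - 1 / x)) ^ 2 / 2)) with hg
  have heq : deriv (chi α) =ᶠ[nhds x] g := by
    filter_upwards [eventually_gt_nhds hx] with y hy
    exact (chi_hasDerivAt α y hy).deriv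
  -- derivative of g
  have hu : HasDerivAt (fun x : ℝ => α / 2 * (x - 1 / x))
      (α / 2 * (1 + 1 / x ^ 2)) x := by
    have hinv : HasDerivAt (fun x : ℝ => 1 / x) (-(1 / x ^ 2)) x := by
      simpa [one_div] using (hasDerivAt_inv hx0)
    have h1 : HasDerivAt (fun x : ℝ => x - 1 / x) (1 + 1 / x ^ 2) x := by
      exact ((hasDerivAt_id x).sub hinv).congr_deriv (by ring)
    simpa using h1.const_mul (α / 2)
  have hw : HasDerivAt (fun x : ℝ => -(α / 2 * (x - 1 / x)) ^ 2 / 2)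
      (-(α / 2 * (x - 1 / x)) * (α / 2 * (1 + 1 / x ^ 2))) x := by
    have := ((hu.pow 2).neg.div_const 2)
    refine this.congr_deriv ?_
    push_cast
    ring
  have hG : HasDerivAt g
      (α * ((Real.sqrt (2 * Real.pi))⁻¹ *
        (Real.exp (-(α / 2 * (x - 1 / x)) ^ 2 / 2) *
          (-(α / 2 * (x - 1 / x)) * (α / 2 * (1 + 1 / x ^ 2)))))) x := by
    have := (hw.exp.const_mul ((Real.sqrt (2 * Real.pi))⁻¹)).const_mul α
    convert this using 1
  have : HasDerivAt (deriv (chi α))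
      (α * ((Real.sqrt (2 * Real.pi))⁻¹ *
        (Real.exp (-(α / 2 * (x - 1 / x)) ^ 2 / 2) *
          (-(α / 2 * (x - 1 / x)) * (α / 2 * (1 + 1 / x ^ 2)))))) x :=
    hG.congr_of_eventuallyEq heq
  convert this using 1
  have hE : Real.exp (-(α ^ 2 / 8) * (x - 1 / x) ^ 2)
      = Real.exp (-(α / 2 * (x - 1 / x)) ^ 2 / 2) := by
    congr 1; ring
  rw [hE]
  have hs : Real.sqrt (2 * Real.pi) ≠ 0 := by
    positivity
  field_simp
  ring
end

section
/- For every α > 0, the standardized call function χ_α is strictly convex on (0,1] and strictly concave on [1,+∞). -/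
open Real Filter Set

lemma continuous_gauss : Continuous (fun t : ℝ => Real.exp (-t ^ 2 / 2)) := by
  continuity

lemma integrable_gauss : MeasureTheory.Integrable (fun t : ℝ => Real.exp (-t ^ 2 / 2)) := by
  have h := integrable_exp_neg_mul_sq (b := (1:ℝ)/2) (by norm_num)
  have : (fun t : ℝ => Real.exp (-t ^ 2 / 2)) = fun t : ℝ => Real.exp (-(1/2) * t ^ 2) := by
    funext t; congr 1; ring
  rw [this]; exact h

lemma hasDerivAt_cdf (x : ℝ) :
    HasDerivAt stdNormalCDF ((Real.sqrt (2 * Real.pi))⁻¹ * Real.exp (-x ^ 2 / 2)) x := by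
  have hint : ∀ y : ℝ, MeasureTheory.IntegrableOn (fun t => Real.exp (-t ^ 2 / 2)) (Set.Iic y) :=
    fun y => integrable_gauss.integrableOn
  have key : stdNormalCDF = fun y =>
      (Real.sqrt (2 * Real.pi))⁻¹ *
        ((∫ t in Set.Iic (0:ℝ), Real.exp (-t ^ 2 / 2)) + ∫ t in (0:ℝ)..y, Real.exp (-t ^ 2 / 2)) := by
    funext y
    rw [stdNormalCDF, ← intervalIntegral.integral_Iic_sub_Iic (hint 0) (hint y)]
    ring
  have hd : HasDerivAt (fun y => ∫ t in (0:ℝ)..y, Real.exp (-t ^ 2 / 2))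
      (Real.exp (-x ^ 2 / 2)) x := by
    apply intervalIntegral.integral_hasDerivAt_right
    · exact integrable_gauss.intervalIntegrable
    · exact continuous_gauss.stronglyMeasurableAtFilter _ _
    · exact continuous_gauss.continuousAt
  rw [key]
  exact ((hd.const_add _).const_mul _)

lemma hasDerivAt_chi (α : ℝ) {x : ℝ} (hx : 0 < x) :
    HasDerivAt (chi α)
      (α * ((Real.sqrt (2 * Real.pi))⁻¹ * Real.exp (-(α / 2 * (x - 1 / x)) ^ 2 / 2))) x := by
  have hx0 : x ≠ 0 := hx.ne'
  have hinv : HasDerivAt (fun y : ℝ => 1 / y) (-(x ^ 2)⁻¹) x := by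
    simpa [one_div] using hasDerivAt_inv hx0
  have ha : HasDerivAt (fun y : ℝ => α / 2 * (y - 1 / y)) (α / 2 * (1 + (x ^ 2)⁻¹)) x := by
    have := ((hasDerivAt_id x).sub hinv).const_mul (α / 2)
    exact this.congr_deriv (by ring)
  have hb : HasDerivAt (fun y : ℝ => -(α / 2) * (y + 1 / y)) (-(α / 2) * (1 - (x ^ 2)⁻¹)) x := by
    have := ((hasDerivAt_id x).add hinv).const_mul (-(α / 2))
    exact this.congr_deriv (by ring)
  have h1 := (hasDerivAt_cdf (α / 2 * (x - 1 / x))).comp x ha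
  have h2 := ((hasDerivAt_cdf (-(α / 2) * (x + 1 / x))).comp x hb).const_mul
      (Real.exp (α ^ 2 / 2))
  have h := h1.sub h2
  have key : Real.exp (α ^ 2 / 2) * Real.exp (-(-(α / 2) * (x + 1 / x)) ^ 2 / 2)
      = Real.exp (-(α / 2 * (x - 1 / x)) ^ 2 / 2) := by
    rw [← Real.exp_add]
    congr 1
    field_simp
    ring
  refine h.congr_deriv ?_
  have : Real.exp (α ^ 2 / 2) * ((Real.sqrt (2 * Real.pi))⁻¹ *
      Real.exp (-(-(α / 2) * (x + 1 / x)) ^ 2 / 2) * (-(α / 2) * (1 - (x ^ 2)⁻¹)))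
      = (Real.sqrt (2 * Real.pi))⁻¹ *
        Real.exp (-(α / 2 * (x - 1 / x)) ^ 2 / 2) * (-(α / 2) * (1 - (x ^ 2)⁻¹)) := by
    rw [← key]; ring
  rw [this]
  ring

lemma deriv2_chi (α : ℝ) {x : ℝ} (hx : 0 < x) :
    deriv^[2] (chi α) x =
      α * ((Real.sqrt (2 * Real.pi))⁻¹ * Real.exp (-(α / 2 * (x - 1 / x)) ^ 2 / 2)) *
        (-(α / 2 * (x - 1 / x)) * (α / 2 * (1 + (x ^ 2)⁻¹))) := by
  have hf : ∀ y ∈ Set.Ioi (0:ℝ), deriv (chi α) y =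
      α * ((Real.sqrt (2 * Real.pi))⁻¹ * Real.exp (-(α / 2 * (y - 1 / y)) ^ 2 / 2)) := by
    intro y hy
    exact (hasDerivAt_chi α hy).deriv
  have hmem : Set.Ioi (0:ℝ) ∈ nhds x := isOpen_Ioi.mem_nhds hx
  have heq : deriv (chi α) =ᶠ[nhds x]
      (fun y => α * ((Real.sqrt (2 * Real.pi))⁻¹ * Real.exp (-(α / 2 * (y - 1 / y)) ^ 2 / 2))) :=
    Filter.eventuallyEq_of_mem hmem hf
  have hx0 : x ≠ 0 := hx.ne'
  have hinv : HasDerivAt (fun y : ℝ => 1 / y) (-(x ^ 2)⁻¹) x := by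
    simpa [one_div] using hasDerivAt_inv hx0
  have ha : HasDerivAt (fun y : ℝ => α / 2 * (y - 1 / y)) (α / 2 * (1 + (x ^ 2)⁻¹)) x := by
    have := ((hasDerivAt_id x).sub hinv).const_mul (α / 2)
    exact this.congr_deriv (by ring)
  have hu : HasDerivAt (fun y : ℝ => -(α / 2 * (y - 1 / y)) ^ 2 / 2)
      (-(α / 2 * (x - 1 / x)) * (α / 2 * (1 + (x ^ 2)⁻¹))) x := by
    have h2 := (ha.pow 2).neg.div_const 2
    exact h2.congr_deriv (by ring)
  have hg : HasDerivAt
      (fun y => α * ((Real.sqrt (2 * Real.pi))⁻¹ * Real.exp (-(α / 2 * (y - 1 / y)) ^ 2 / 2)))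
      (α * ((Real.sqrt (2 * Real.pi))⁻¹ * Real.exp (-(α / 2 * (x - 1 / x)) ^ 2 / 2)) *
        (-(α / 2 * (x - 1 / x)) * (α / 2 * (1 + (x ^ 2)⁻¹)))) x := by
    have he := (hu.exp.const_mul ((Real.sqrt (2 * Real.pi))⁻¹)).const_mul α
    exact he.congr_deriv (by ring)
  calc deriv^[2] (chi α) x = deriv (deriv (chi α)) x := by
        simp [Function.iterate_succ, Function.comp]
    _ = _ := by rw [heq.deriv_eq]; exact hg.deriv

theorem chi_convex_concave (α : ℝ) (hα : 0 < α) :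
    StrictConvexOn ℝ (Set.Ioc 0 1) (chi α) ∧
      StrictConcaveOn ℝ (Set.Ici 1) (chi α) := by
  have hcont : ∀ s : Set ℝ, s ⊆ Set.Ioi 0 → ContinuousOn (chi α) s := by
    intro s hs y hy
    exact ((hasDerivAt_chi α (hs hy)).continuousAt).continuousWithinAt
  have hc : (0:ℝ) < (Real.sqrt (2 * Real.pi))⁻¹ := by
    positivity
  constructor
  · apply strictConvexOn_of_deriv2_pos (convex_Ioc 0 1) (hcont _ (fun y hy => hy.1))
    intro x hx
    rw [interior_Ioc] at hx
    rw [deriv2_chi α hx.1]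
    have h1 : (0:ℝ) < α * ((Real.sqrt (2 * Real.pi))⁻¹ *
        Real.exp (-(α / 2 * (x - 1 / x)) ^ 2 / 2)) := by positivity
    have h2 : (0:ℝ) < -(α / 2 * (x - 1 / x)) := by
      have : x - 1 / x < 0 := by
        rw [sub_neg]
        rw [lt_div_iff₀ hx.1]
        nlinarith [hx.1, hx.2]
      nlinarith [hα]
    have h3 : (0:ℝ) < α / 2 * (1 + (x ^ 2)⁻¹) := by positivity
    positivity
  · apply strictConcaveOn_of_deriv2_neg (convex_Ici 1) (hcont _ (fun y hy => show (0:ℝ) < y from lt_of_lt_of_le one_pos hy))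
    intro x hx
    rw [interior_Ici] at hx
    have hx0 : (0:ℝ) < x := lt_trans one_pos hx
    rw [deriv2_chi α hx0]
    have h1 : (0:ℝ) < α * ((Real.sqrt (2 * Real.pi))⁻¹ *
        Real.exp (-(α / 2 * (x - 1 / x)) ^ 2 / 2)) := by positivity
    have h2 : -(α / 2 * (x - 1 / x)) < 0 := by
      have hx1 : (1:ℝ) < x := hx
      have : 0 < x - 1 / x := by
        rw [sub_pos, div_lt_iff₀ hx0]
        nlinarith [hx1]
      nlinarith [hα]
    have h3 : (0:ℝ) < α / 2 * (1 + (x ^ 2)⁻¹) := by positivity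
    exact mul_neg_of_pos_of_neg h1 (mul_neg_of_neg_of_pos h2 h3)
end
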